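/- Define P^u_d(m) = Σ_{k=0}^{d-m} C(d-m,k) · ∏_{i=0}^{k-1}(m+i+1-r)(i+r) · ∏_{j=k+1}^{d-m}(d-m+r-j)(u+r+j) and ψ_k(x) = ∏_{i=1}^{k}(x+i)(i-1+2r). Then for all natural numbers m ≤ d, one has P^m_d(m) = ψ_{d-m}(m), as polynomials in r. -/

import Mathlib

open Polynomial Finset

/-- `P u d m = Σ_{k=0}^{d-m} C(d-m,k) · ∏_{i=0}^{k-1}(m+i+1-r)(i+r)
· ∏_{j=k+1}^{d-m}(d-m+r-j)(u+r+j)`, a polynomial in the indeterminate `r = X` over `ℚ`. -/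
noncomputable def P (u d m : ℕ) : Polynomial ℚ :=
  ∑ k ∈ Finset.range (d - m + 1),
    ((d - m).choose k : ℚ[X]) *
      (∏ i ∈ Finset.range k, (((m : ℚ[X]) + (i : ℚ[X]) + 1 - X) * ((i : ℚ[X]) + X))) *
      ∏ j ∈ Finset.Icc (k + 1) (d - m),
        ((((d - m : ℕ) : ℚ[X]) + X - (j : ℚ[X])) * ((u : ℚ[X]) + X + (j : ℚ[X])))

/-- `ψ k x = ∏_{i=1}^{k} (x+i)(i-1+2r)`. -/
noncomputable def psi (k : ℕ) (x : Polynomial ℚ) : Polynomial ℚ :=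
  ∏ i ∈ Finset.Icc 1 k, ((x + (i : ℚ[X])) * ((i : ℚ[X]) - 1 + 2 * X))


noncomputable def A (m k : ℕ) : ℚ[X] :=
  ∏ i ∈ Finset.range k, (((m : ℚ[X]) + (i : ℚ[X]) + 1 - X) * ((i : ℚ[X]) + X))

noncomputable def U (s : ℕ) : ℚ[X] := ∏ t ∈ Finset.range s, (X + (t : ℚ[X]))

noncomputable def Z (m k n : ℕ) : ℚ[X] := ∏ j ∈ Finset.Icc (k+1) n, ((m : ℚ[X]) + X + (j : ℚ[X]))

noncomputable def Q (m n : ℕ) : ℚ[X] :=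
  ∑ k ∈ Finset.range (n+1), (n.choose k : ℚ[X]) * A m k * (U (n-k) * Z m k n)

lemma A_succ (m k : ℕ) :
    A m (k+1) = A m k * (((m : ℚ[X]) + (k : ℚ[X]) + 1 - X) * ((k : ℚ[X]) + X)) := by
  rw [A, prod_range_succ]; rfl

lemma A_zero (m : ℕ) : A m 0 = 1 := by rw [A, prod_range_zero]

lemma U_succ (s : ℕ) : U (s+1) = U s * (X + (s : ℚ[X])) := by
  rw [U, prod_range_succ]; rfl

lemma U_zero : U 0 = 1 := by rw [U, prod_range_zero]

lemma Z_top (m k n : ℕ) (h : k ≤ n) :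
    Z m k (n+1) = Z m k n * ((m : ℚ[X]) + X + ((n+1 : ℕ) : ℚ[X])) := by
  rw [Z, prod_Icc_succ_top (by omega), Z]

lemma Z_bot (m k n : ℕ) (h : k + 1 ≤ n) :
    Z m k n = ((m : ℚ[X]) + X + ((k+1 : ℕ) : ℚ[X])) * Z m (k+1) n := by
  rw [Z, Z, ← Finset.Ico_add_one_right_eq_Icc, ← Finset.Ico_add_one_right_eq_Icc,
    prod_eq_prod_Ico_succ_bot (by omega)]

lemma Z_empty (m k n : ℕ) (h : n ≤ k) : Z m k n = 1 := by
  rw [Z, Finset.Icc_eq_empty (by omega), prod_empty]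

lemma reindex (m n k : ℕ) (h : k ≤ n) :
    (∏ j ∈ Finset.Icc (k+1) n,
      (((n : ℚ[X]) + X - (j : ℚ[X])) * ((m : ℚ[X]) + X + (j : ℚ[X]))))
    = U (n-k) * Z m k n := by
  rw [prod_mul_distrib, Z]
  congr 1
  rw [← Finset.Ico_add_one_right_eq_Icc, prod_Ico_eq_prod_range, U]
  have hs : n + 1 - (k+1) = n - k := by omega
  rw [hs, ← prod_range_reflect]
  refine prod_congr rfl ?_
  intro i hi
  rw [mem_range] at hi
  have h1 : k + 1 + (n - k - 1 - i) = n - i := by omega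
  rw [h1, Nat.cast_sub (by omega : i ≤ n)]
  ring

noncomputable def G (m n : ℕ) : ℕ → ℚ[X]
  | 0 => 0
  | (k+1) =>
    if k + 1 ≤ n then
      -((n.choose k : ℚ[X])) * ((n : ℚ[X]) + X - ((k+1 : ℕ) : ℚ[X]))
        * ((m : ℚ[X]) + X + ((k+1 : ℕ) : ℚ[X])) * A m (k+1) * (U (n-(k+1)) * Z m (k+1) n)
    else if k = n then -A m (n+1) else 0

lemma step (m n k : ℕ) (hk : k ≤ n + 1) :
    ((n+1).choose k : ℚ[X]) * A m k * (U (n+1-k) * Z m k (n+1))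
      - ((m : ℚ[X]) + 1 + (n : ℚ[X])) * (2*X + (n : ℚ[X]))
        * ((n.choose k : ℚ[X]) * A m k * (U (n-k) * Z m k n))
    = G m n (k+1) - G m n k := by
  rcases Nat.lt_or_ge k (n+1) with hlt | hge
  swap
  · -- k = n+1
    have hk1 : k = n+1 := by omega
    subst hk1
    have e0 : n + 1 - (n+1) = 0 := by omega
    have e0' : n - (n+1) = 0 := by omega
    have e2 : (n.choose (n+1) : ℚ[X]) = 0 := by
      rw [Nat.choose_eq_zero_of_lt (by omega)]; norm_num
    have e3 : G m n (n+1+1) = 0 := by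
      simp only [G, if_neg (by omega : ¬ (n + 1 + 1 ≤ n)), if_neg (by omega : ¬ (n + 1 = n))]
    have e4 : G m n (n+1) = -A m (n+1) := by
      simp only [G, if_neg (by omega : ¬ (n + 1 ≤ n)), if_pos rfl]
      simp
    rw [e0, e0', e2, e3, e4, Nat.choose_self, Z_empty m (n+1) (n+1) (by omega), Z_empty m (n+1) n (by omega), U_zero]
    push_cast
    ring
  · rcases k with _ | j
    · -- k = 0
      rcases n with _ | n'
      · -- n = 0
        have e4 : G m 0 1 = -A m 1 := by
          simp only [G, if_neg (by omega : ¬ (0 + 1 ≤ 0)), if_pos rfl]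
          simp
        rw [e4, Z_top m 0 0 (by omega), Z_empty m 0 0 (by omega)]
        have hG0 : G m 0 0 = 0 := rfl
        rw [hG0]
        norm_num [A_succ, A_zero, U_succ, U_zero]
        push_cast
        ring
      · -- n = n'+1, k = 0
        set n := n' + 1 with hn
        have g1 : G m n 1 = -((n.choose 0 : ℚ[X])) * ((n : ℚ[X]) + X - ((1 : ℕ) : ℚ[X]))
            * ((m : ℚ[X]) + X + ((1 : ℕ) : ℚ[X])) * A m 1 * (U (n-1) * Z m 1 n) := by
          simp only [G, if_pos (by omega : 0 + 1 ≤ n)]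
        have g0 : G m n 0 = 0 := rfl
        rw [g1, g0]
        rw [show n + 1 - 0 = (n' + 1) + 1 by omega, show n - 0 = n' + 1 by omega,
          show n - 1 = n' by omega]
        rw [U_succ, U_succ, Z_top m 0 n (by omega), Z_bot m 0 n (by omega),
          Nat.choose_zero_right, Nat.choose_zero_right, A_succ, A_zero]
        push_cast
        simp only [hn]
        push_cast
        ring
    · -- k = j+1 ≤ n
      rcases Nat.lt_or_ge (j+1) n with hjn | hjn
      · -- j+2 ≤ n : generic
        set t := n - j - 2 with ht
        have hc1 : (((n+1)).choose (j+1) : ℚ[X]) = (n.choose j : ℚ[X]) + (n.choose (j+1) : ℚ[X]) := by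
          rw [Nat.choose_succ_succ' n j]; push_cast; ring
        have hc2 : (n.choose (j+1) : ℚ[X]) * ((j : ℚ[X]) + 1)
            = (n.choose j : ℚ[X]) * ((t : ℚ[X]) + 2) := by
          have h := Nat.choose_succ_right_eq n j
          rw [show n - j = t + 2 by omega] at h
          exact_mod_cast congrArg (Nat.cast : ℕ → ℚ[X]) h
        have hn : (n : ℚ[X]) = (j : ℚ[X]) + 2 + (t : ℚ[X]) := by
          rw [show n = j + 2 + t by omega]; push_cast; ring
        have g2 : G m n (j+1+1) = -((n.choose (j+1) : ℚ[X])) * ((n : ℚ[X]) + X - ((j+2 : ℕ) : ℚ[X]))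
            * ((m : ℚ[X]) + X + ((j+2 : ℕ) : ℚ[X])) * A m (j+2) * (U (n-(j+2)) * Z m (j+2) n) := by
          simp only [G, if_pos (by omega : j + 1 + 1 ≤ n)]
        have g1 : G m n (j+1) = -((n.choose j : ℚ[X])) * ((n : ℚ[X]) + X - ((j+1 : ℕ) : ℚ[X]))
            * ((m : ℚ[X]) + X + ((j+1 : ℕ) : ℚ[X])) * A m (j+1) * (U (n-(j+1)) * Z m (j+1) n) := by
          simp only [G, if_pos (by omega : j + 1 ≤ n)]
        rw [g2, g1]
        rw [show n + 1 - (j+1) = (t + 1) + 1 by omega, show n - (j+1) = t + 1 by omega,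
          show n - (j+2) = t by omega]
        rw [U_succ, U_succ, Z_top m (j+1) n (by omega), Z_bot m (j+1) n (by omega),
          A_succ m (j+1), hc1]
        push_cast
        rw [hn]
        linear_combination (-(X + (t:ℚ[X]) + 1) * (X + (t:ℚ[X])) * ((m:ℚ[X]) + X + (j:ℚ[X]) + 2)
          * A m (j+1) * U t * Z m (j+2) n) * hc2
      · -- j+1 = n
        have hjn' : n = j + 1 := by omega
        subst hjn'
        have g2 : G m (j+1) (j+1+1) = -A m (j+2) := by
          simp only [G, if_neg (by omega : ¬ (j + 1 + 1 ≤ j + 1)), if_pos rfl]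
          simp
        have g1 : G m (j+1) (j+1) = -(((j+1).choose j : ℚ[X])) * (((j+1 : ℕ) : ℚ[X]) + X - ((j+1 : ℕ) : ℚ[X]))
            * ((m : ℚ[X]) + X + ((j+1 : ℕ) : ℚ[X])) * A m (j+1) * (U ((j+1)-(j+1)) * Z m (j+1) (j+1)) := by
          simp only [G, if_pos (by omega : j + 1 ≤ j + 1)]
        rw [g2, g1]
        rw [show j + 1 + 1 - (j+1) = 1 by omega, show j + 1 - (j+1) = 0 by omega]
        rw [U_succ, U_zero, Z_top m (j+1) (j+1) (by omega), Z_empty m (j+1) (j+1) (by omega),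
          Nat.choose_self, Nat.choose_succ_self_right j, Nat.choose_succ_self_right (j+1), A_succ m (j+1)]
        push_cast
        ring

lemma Q_succ (m n : ℕ) :
    Q m (n+1) = ((m : ℚ[X]) + 1 + (n : ℚ[X])) * (2*X + (n : ℚ[X])) * Q m n := by
  have key : ∑ k ∈ range (n+2),
      (((n+1).choose k : ℚ[X]) * A m k * (U (n+1-k) * Z m k (n+1))
        - ((m : ℚ[X]) + 1 + (n : ℚ[X])) * (2*X + (n : ℚ[X]))
          * ((n.choose k : ℚ[X]) * A m k * (U (n-k) * Z m k n)))
      = G m n (n+2) - G m n 0 := by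
    rw [← Finset.sum_range_sub (G m n) (n+2)]
    refine sum_congr rfl ?_
    intro k hk
    exact step m n k (by rw [mem_range] at hk; omega)
  have hG0 : G m n 0 = 0 := rfl
  have hGtop : G m n (n+2) = 0 := by
    simp only [G, if_neg (by omega : ¬ (n + 1 + 1 ≤ n)), if_neg (by omega : ¬ (n + 1 = n))]
  have hlast : ((n.choose (n+1) : ℚ[X]) * A m (n+1) * (U (n-(n+1)) * Z m (n+1) n)) = 0 := by
    rw [Nat.choose_eq_zero_of_lt (by omega)]
    simp
  rw [hG0, hGtop, sum_sub_distrib, ← mul_sum] at key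
  have h1 : ∑ k ∈ range (n+2),
      ((n+1).choose k : ℚ[X]) * A m k * (U (n+1-k) * Z m k (n+1)) = Q m (n+1) := rfl
  have h2 : ∑ k ∈ range (n+2),
      (n.choose k : ℚ[X]) * A m k * (U (n-k) * Z m k n) = Q m n := by
    rw [sum_range_succ, hlast, add_zero, Q]
  rw [h1, h2] at key
  linear_combination key

lemma Q_eq_psi (m n : ℕ) : Q m n = psi n ((m : ℚ[X])) := by
  induction n with
  | zero =>
    rw [Q, psi, Finset.Icc_eq_empty (by omega), prod_empty]
    simp [A_zero, U_zero, Z_empty m 0 0 (by omega)]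
  | succ n ih =>
    have hp : psi (n+1) ((m : ℚ[X])) = psi n ((m : ℚ[X])) *
        (((m : ℚ[X]) + ((n+1 : ℕ) : ℚ[X])) * (((n+1 : ℕ) : ℚ[X]) - 1 + 2*X)) := by
      rw [psi, psi, prod_Icc_succ_top (by omega : 1 ≤ n + 1)]
    rw [Q_succ, ih, hp]
    push_cast
    ring

theorem stmt18' (d m : ℕ) (hmd : m ≤ d) :
    (∑ k ∈ Finset.range (d - m + 1),
      ((d - m).choose k : ℚ[X]) *
        (∏ i ∈ Finset.range k, (((m : ℚ[X]) + (i : ℚ[X]) + 1 - X) * ((i : ℚ[X]) + X))) *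
        ∏ j ∈ Finset.Icc (k + 1) (d - m),
          ((((d - m : ℕ) : ℚ[X]) + X - (j : ℚ[X])) * ((m : ℚ[X]) + X + (j : ℚ[X]))))
    = psi (d - m) ((m : ℚ[X])) := by
  rw [← Q_eq_psi m (d - m), Q]
  refine sum_congr rfl ?_
  intro k hk
  rw [mem_range] at hk
  rw [reindex m (d - m) k (by omega), A, mul_assoc]

theorem stmt18 (d m : ℕ) (hmd : m ≤ d) : P m d m = psi (d - m) (m : ℚ[X]) := by
  rw [P]
  exact stmt18' d m hmd
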